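/- arXiv:1212.4310 — 3 statements merged into one kernel-verified Lean document; each statement's English description precedes it below -/
import Mathlib

section
/- Let (F, ξ) : (C, D, η) → (C', D', η') be a morphism of categories with duality whose underlying functor F is an equivalence of categories. Then (F, ξ) is an equivalence of categories with duality: there exists a morphism of categories with duality (G, χ) : (C', D', η') → (C, D, η) together with natural isomorphisms ε : (F,ξ)∘(G,χ) ⇒ id and μ : id ⇒ (G,χ)∘(F,ξ) which are natural transformations of morphisms of categories with duality (i.e., compatible with ξ and χ in the sense that the appropriate squares involving D, D', ξ, χ commute). -/
open CategoryTheory Opposite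

/-- A morphism of categories with duality `(F, ξ)` whose underlying functor `F` is an
equivalence of categories is an equivalence of categories with duality: there is an inverse
morphism `(G, χ)` and natural isomorphisms `ε : (F,ξ)∘(G,χ) ⇒ id`, `μ : id ⇒ (G,χ)∘(F,ξ)`
which are natural transformations of morphisms of categories with duality. -/
theorem stmt1 {C C' : Type*} [Category C] [Category C']
    (D : Cᵒᵖ ⥤ C) (η : 𝟭 C ≅ D.rightOp ⋙ D)
    (htriC : ∀ c : C, η.hom.app (D.obj (op c)) ≫ D.map (η.hom.app c).op = 𝟙 (D.obj (op c)))
    (D' : C'ᵒᵖ ⥤ C') (η' : 𝟭 C' ≅ D'.rightOp ⋙ D')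
    (htriC' : ∀ c : C',
      η'.hom.app (D'.obj (op c)) ≫ D'.map (η'.hom.app c).op = 𝟙 (D'.obj (op c)))
    (F : C ⥤ C') (ξ : D ⋙ F ≅ F.op ⋙ D')
    (hξ : ∀ c : C, F.map (η.hom.app c) ≫ ξ.hom.app (op (D.obj (op c))) =
      η'.hom.app (F.obj c) ≫ D'.map (ξ.hom.app (op c)).op)
    [F.IsEquivalence] :
    ∃ (G : C' ⥤ C) (χ : D' ⋙ G ≅ G.op ⋙ D),
      -- (G, χ) is a morphism of categories with duality
      (∀ c' : C', G.map (η'.hom.app c') ≫ χ.hom.app (op (D'.obj (op c'))) =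
        η.hom.app (G.obj c') ≫ D.map (χ.hom.app (op c')).op) ∧
      ∃ (ε : G ⋙ F ≅ 𝟭 C') (μ : 𝟭 C ≅ F ⋙ G),
        -- ε : (F,ξ)∘(G,χ) ⇒ id is a natural transformation of morphisms of
        -- categories with duality
        (∀ c' : C', F.map (χ.hom.app (op c')) ≫ ξ.hom.app (op (G.obj c')) =
          ε.hom.app (D'.obj (op c')) ≫ D'.map (ε.hom.app c').op) ∧
        -- μ : id ⇒ (G,χ)∘(F,ξ) is a natural transformation of morphisms of
        -- categories with duality
        (∀ c : C, μ.hom.app (D.obj (op c)) ≫ G.map (ξ.hom.app (op c)) ≫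
            χ.hom.app (op (F.obj c)) ≫ D.map (μ.hom.app c).op = 𝟙 (D.obj (op c))) := by
  let E : C ≌ C' := F.asEquivalence
  let G : C' ⥤ C := E.inverse
  let ε : G ⋙ F ≅ 𝟭 C' := E.counitIso
  let μ : 𝟭 C ≅ F ⋙ G := E.unitIso
  let χ : D' ⋙ G ≅ G.op ⋙ D := NatIso.ofComponents
    (fun X => G.mapIso ((D'.mapIso (ε.app X.unop).op) ≪≫ (ξ.app (op (G.obj X.unop))).symm)
      ≪≫ (μ.app (D.obj (op (G.obj X.unop)))).symm)
    (fun {X Y} f => by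
      dsimp
      have h1 : f ≫ (ε.hom.app Y.unop).op = (ε.hom.app X.unop).op ≫ (F.map (G.map f.unop)).op :=
        Quiver.Hom.unop_inj (by simpa using (ε.hom.naturality f.unop).symm)
      have h2 := ξ.inv.naturality (G.map f.unop).op
      have h3 := μ.inv.naturality (D.map (G.map f.unop).op)
      dsimp at h2 h3
      simp only [Iso.op_hom, Iso.app_hom]
      rw [← Functor.map_comp_assoc, ← D'.map_comp_assoc, h1, D'.map_comp_assoc, h2]
      rw [Functor.map_comp, Functor.map_comp, Category.assoc, Category.assoc, h3]
      simp)
  have hχ : ∀ x : C', χ.hom.app (op x) =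
      G.map (D'.map (ε.hom.app x).op ≫ ξ.inv.app (op (G.obj x)))
        ≫ μ.inv.app (D.obj (op (G.obj x))) := fun x => by
    simp [χ]
  have hFG : ∀ {X Y : C'} (f : X ⟶ Y), F.map (G.map f) = ε.hom.app X ≫ f ≫ ε.inv.app Y :=
    fun f => E.fun_inv_map _ _ f
  have hFμ : ∀ x : C, F.map (μ.inv.app x) = ε.hom.app (F.obj x) :=
    fun x => (E.counit_app_functor x).symm
  have hFχ : ∀ x : C', F.map (χ.hom.app (op x)) =
      ε.hom.app (D'.obj (op x)) ≫ D'.map (ε.hom.app x).op ≫ ξ.inv.app (op (G.obj x)) := by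
    intro x
    rw [hχ, Functor.map_comp, hFG, hFμ]
    simp
  refine ⟨G, χ, ?_, ε, μ, ?_, ?_⟩
  · -- condition 1
    intro c'
    apply F.map_injective
    have hη := hξ (G.obj c')
    have hη' : F.map (η.hom.app (G.obj c')) =
        η'.hom.app (F.obj (G.obj c')) ≫ D'.map (ξ.hom.app (op (G.obj c'))).op ≫
          ξ.inv.app (op (D.obj (op (G.obj c')))) := by
      rw [← Category.assoc, ← hη]; simp
    have h2 := ξ.inv.naturality (χ.hom.app (op c')).op
    dsimp at h2
    have hnat := η'.hom.naturality (ε.hom.app c')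
    dsimp at hnat
    rw [Functor.map_comp, Functor.map_comp, hFG, hFχ, hη']
    simp only [Category.assoc]
    rw [← h2, hFχ]
    simp only [Functor.id_obj, Functor.comp_obj, Functor.rightOp_obj, unop_op, op_comp,
      Functor.map_comp, Category.assoc, Iso.inv_hom_id_app_assoc]
    rw [← D'.map_comp_assoc, ← op_comp]
    simp only [Iso.inv_hom_id_app, op_id, CategoryTheory.Functor.map_id, Category.id_comp]
    rw [reassoc_of% hnat]
  · -- condition 2
    intro c'
    rw [hFχ]
    simp
  · -- condition 3
    intro c
    have h1 : ε.hom.app (F.obj c) = F.map (μ.inv.app c) := E.counit_app_functor c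
    have h2 := ξ.inv.naturality (μ.inv.app c).op
    have h3 := μ.inv.naturality (D.map (μ.inv.app c).op)
    dsimp at h2 h3
    have hcancel : ∀ X : Cᵒᵖ, G.map (ξ.hom.app X) ≫ G.map (ξ.inv.app X) = 𝟙 _ := by
      intro X; rw [← G.map_comp]; simp
    rw [hχ, h1, h2]
    simp only [Functor.map_comp, Category.assoc]
    rw [← Category.assoc (G.map (ξ.hom.app (op c))), hcancel, Category.id_comp,
      ← Category.assoc (G.map (F.map (D.map (μ.inv.app c).op))), h3]
    simp only [Category.assoc, Iso.hom_inv_id_app_assoc]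
    rw [← D.map_comp, ← op_comp]
    simp
end

section
/- Let (C, D, η) be a category with duality. Define the category 𝒟C whose objects are triples (c, d, φ) with φ : d → D(c) an isomorphism in C, and whose morphisms (c,d,φ) → (c',d',φ') are pairs (a : c → c', b : d' → d) with φ ∘ b = D(a) ∘ φ'. Define 𝔇 : (𝒟C)^op → 𝒟C on objects by 𝔇(c,d,φ) = (d, c, D(φ) ∘ η_c) and on morphisms by 𝔇(a,b) = (b,a). Then 𝔇 is a well-defined functor and 𝔇 ∘ 𝔇^op is the identity functor, i.e. 𝔇 is a strict duality on 𝒟C. -/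
open CategoryTheory Opposite

variable {C : Type*} [Category C]

/-- Objects of `𝒟C`: triples `(c, d, φ)` with `φ : d ≅ D(c)`. -/
structure DObj (D : Cᵒᵖ ⥤ C) where
  c : C
  d : C
  φ : d ≅ D.obj (op c)

variable {D : Cᵒᵖ ⥤ C}

/-- Morphisms of `𝒟C`: pairs `(a : c ⟶ c', b : d' ⟶ d)` with `φ ∘ b = D(a) ∘ φ'`. -/
@[ext]
structure DHom (X Y : DObj D) where
  a : X.c ⟶ Y.c
  b : Y.d ⟶ X.d
  comm : b ≫ X.φ.hom = Y.φ.hom ≫ D.map a.op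

instance : Category (DObj D) where
  Hom := DHom
  id X := ⟨𝟙 _, 𝟙 _, by simp⟩
  comp f g := ⟨f.a ≫ g.a, g.b ≫ f.b, by
    rw [Category.assoc, f.comm, ← Category.assoc, g.comm, Category.assoc,
      ← Functor.map_comp, ← op_comp]⟩
  id_comp f := DHom.ext (Category.id_comp _) (Category.comp_id _)
  comp_id f := DHom.ext (Category.comp_id _) (Category.id_comp _)
  assoc f g h := DHom.ext (Category.assoc _ _ _) (Category.assoc _ _ _).symm

/-- The strict duality `𝔇` on `𝒟C`, given on objects by
`𝔇(c,d,φ) = (d, c, D(φ) ∘ η_c)` and on morphisms by `𝔇(a,b) = (b,a)`. -/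
def strictD (η : 𝟭 C ≅ D.rightOp ⋙ D) : (DObj D)ᵒᵖ ⥤ DObj D where
  obj X := ⟨X.unop.d, X.unop.c, η.app X.unop.c ≪≫ D.mapIso X.unop.φ.op⟩
  map f := ⟨f.unop.b, f.unop.a, by
    have hnat := η.hom.naturality f.unop.a
    have hcomm := f.unop.comm
    dsimp at hnat ⊢
    simp only [Category.assoc]
    rw [← Category.assoc, hnat, Category.assoc, ← Functor.map_comp, ← Functor.map_comp]
    congr 2
    apply Quiver.Hom.unop_inj
    simp [hcomm]⟩
  map_id X := DHom.ext rfl rfl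
  map_comp f g := DHom.ext rfl rfl

lemma eqToHom_a {X Y : DObj D} (h : X = Y) :
    (eqToHom h).a = eqToHom (congrArg DObj.c h) := by subst h; rfl

lemma eqToHom_b {X Y : DObj D} (h : X = Y) :
    (eqToHom h).b = eqToHom (congrArg DObj.d h.symm) := by subst h; rfl

/-- `𝔇` is a well-defined functor (the construction above), and `𝔇 ∘ 𝔇^op` is the
identity functor of `𝒟C`: `𝔇` is a strict duality. -/
theorem stmt2 (η : 𝟭 C ≅ D.rightOp ⋙ D)
    (htri : ∀ c : C, η.hom.app (D.obj (op c)) ≫ D.map (η.hom.app c).op = 𝟙 (D.obj (op c))) :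
    (strictD η).rightOp ⋙ strictD η = 𝟭 (DObj D) := by
  have hobj : ∀ X : DObj D, ((strictD η).rightOp ⋙ strictD η).obj X = X := by
    intro X
    cases X with
    | mk c d φ =>
      show DObj.mk c d _ = DObj.mk c d φ
      congr 1
      apply Iso.ext
      dsimp [strictD]
      simp only [Functor.mapIso_hom, Iso.op_hom, Iso.app_hom, op_comp, Functor.map_comp, Category.assoc]
      have hnat := η.hom.naturality φ.hom
      dsimp at hnat
      rw [← Category.assoc, ← hnat, Category.assoc, htri c, Category.comp_id]
  refine CategoryTheory.Functor.ext hobj fun X Y f => ?_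
  refine DHom.ext ?_ ?_ <;> simp only [Functor.comp_map, Functor.id_map] <;>
    simp [eqToHom_a, eqToHom_b, strictD, CategoryStruct.comp]
  · erw [eqToHom_a, eqToHom_a]; simp
  · erw [eqToHom_b, eqToHom_b]; simp
end

section
/- Let J be a category, F : J → J a functor, and U : id ⇒ F a natural transformation satisfying F(U_i) = U_{F(i)} for every object i of J. Fix an object i and consider the comma category i/F whose objects are pairs (i', f : i → F(i')) and whose morphisms (i', f) → (i'', g) are morphisms a : i' → i'' with F(a) ∘ f = g. Define G : i/F → i/F by G(i', f) = (F(i'), F(U_{i'}) ∘ f) and G(a) = F(a). Then: (1) G is a well-defined functor; (2) the maps U_{i'} : i' → F(i') define a natural transformation id_{i/F} ⇒ G; and (3) the maps f : i → F(i') themselves define a natural transformation Δ ⇒ G, where Δ is the constant functor at the object (i, U_i). In particular, the comma category i/F is connected (and its nerve is contractible). -/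
open CategoryTheory

variable {J : Type*} [Category J]

/-- The endofunctor `G` of the comma category `i/F` induced by a natural transformation
`U : id ⇒ F` with `F(U_i) = U_{F(i)}`: `G(i', f) = (F(i'), F(U_{i'}) ∘ f)`, `G(a) = F(a)`. -/
def shiftG (F : J ⥤ J) (U : 𝟭 J ⟶ F) (hU : ∀ x : J, F.map (U.app x) = U.app (F.obj x))
    (i : J) : StructuredArrow i F ⥤ StructuredArrow i F where
  obj X := StructuredArrow.mk (X.hom ≫ F.map (U.app X.right))
  map {X Y} a := StructuredArrow.homMk (F.map a.right) (by
    have w := StructuredArrow.w a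
    dsimp
    rw [Category.assoc, ← Functor.map_comp, ← U.naturality a.right]
    dsimp
    rw [Functor.map_comp, ← Category.assoc, w])
  map_id X := by
    apply CommaMorphism.ext <;> simp
  map_comp f g := by
    apply CommaMorphism.ext <;> simp

/-- `U` gives a natural transformation `id ⇒ G`. -/
def natU (F : J ⥤ J) (U : 𝟭 J ⟶ F) (hU : ∀ x : J, F.map (U.app x) = U.app (F.obj x))
    (i : J) : 𝟭 (StructuredArrow i F) ⟶ shiftG F U hU i where
  app X := StructuredArrow.homMk (U.app X.right) rfl
  naturality X Y a := by
    apply CommaMorphism.ext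
    · simp
    · exact (U.naturality a.right)

/-- The structure maps give `Δ_{(i, U_i)} ⇒ G`. -/
def natC (F : J ⥤ J) (U : 𝟭 J ⟶ F) (hU : ∀ x : J, F.map (U.app x) = U.app (F.obj x))
    (i : J) : (Functor.const (StructuredArrow i F)).obj (StructuredArrow.mk (U.app i)) ⟶
      shiftG F U hU i where
  app X := StructuredArrow.homMk X.hom (by
    dsimp [shiftG]
    rw [hU]
    simpa using (U.naturality X.hom).symm)
  naturality X Y a := by
    apply CommaMorphism.ext
    · simp
    · dsimp [shiftG]; simp only [Category.id_comp]; exact (StructuredArrow.w a).symm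

/-- The maps `U_{i'}` give a natural transformation `id ⇒ G`, the maps `f : i → F(i')`
themselves give a natural transformation `Δ_{(i, U_i)} ⇒ G`, and in particular the comma
category `i/F` is connected. -/
theorem stmt14 (F : J ⥤ J) (U : 𝟭 J ⟶ F) (hU : ∀ x : J, F.map (U.app x) = U.app (F.obj x))
    (i : J) :
    (∃ t : 𝟭 (StructuredArrow i F) ⟶ shiftG F U hU i,
      ∀ X : StructuredArrow i F, (t.app X).right = U.app X.right) ∧
    (∃ t' : (Functor.const (StructuredArrow i F)).obj (StructuredArrow.mk (U.app i)) ⟶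
        shiftG F U hU i,
      ∀ X : StructuredArrow i F, (t'.app X).right = X.hom) ∧
    IsConnected (StructuredArrow i F) := by
  refine ⟨⟨natU F U hU i, fun X => rfl⟩, ⟨natC F U hU i, fun X => rfl⟩, ?_⟩
  have : Nonempty (StructuredArrow i F) := ⟨StructuredArrow.mk (U.app i)⟩
  apply zigzag_isConnected
  intro j₁ j₂
  have h : ∀ j : StructuredArrow i F, Zigzag (StructuredArrow.mk (U.app i)) j := fun j =>
    Relation.ReflTransGen.tail (Relation.ReflTransGen.single (Or.inl ⟨(natC F U hU i).app j⟩))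
      (Or.inr ⟨(natU F U hU i).app j⟩)
  exact (h j₁).symm.trans (h j₂)
end
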